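/- There exists an absolute constant C > 0 with the following property. For every integer d ≥ 1, every integer N ≥ 1, and every subset A ⊆ {1,2,…,N}, there exist an integer m with 1 ≤ m ≤ 2^(d(d+1)), nonnegative reals λ_1,…,λ_m with λ_1 + ⋯ + λ_m = 1, integers M_1,…,M_m with 1 ≤ M_i ≤ 2^d, and subsets B_i ⊆ ℤ_{M_i}, such that for every j ∈ {1,…,d}: | (1/N)·r_A(j) − ∑_{i=1}^{m} λ_i · r_{B_i}(j)/M_i | ≤ C·2^d·2^(d(d+1))/N. -/

import Mathlib

/-- `r_A(x)`: number of ordered pairs `(a,b) ∈ A × A` with `a - b = x`. -/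
def rZ (A : Finset ℤ) (x : ℤ) : ℕ :=
  ((A ×ˢ A).filter (fun p => p.1 - p.2 = x)).card

/-- `r_B(x)` for `B ⊆ ℤ_M`: pairs `(u,v) ∈ B × B` with `u - v = x mod M`. -/
def rMod (M : ℕ) (B : Finset (ZMod M)) (x : ℤ) : ℕ :=
  ((B ×ˢ B).filter (fun p => p.1 - p.2 = (x : ZMod M))).card

open Finset


/-- count of `i ∈ [0,L)` with `y i` and `y (i+j)`. -/
noncomputable def cnt (L : ℤ) (y : ℤ → Bool) (j : ℤ) : ℕ :=
  ((Finset.Ico 0 L).filter (fun i => y i = true ∧ y (i + j) = true)).card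

lemma per_congr {L : ℤ} {y : ℤ → Bool} (hy : ∀ t, y t = y (t % L))
    {a b : ℤ} (h : a % L = b % L) : y a = y b := by
  rw [hy a, hy b, h]

lemma emod_add_right_emod (a j L : ℤ) : (a % L + j) % L = (a + j) % L := by
  conv_rhs => rw [Int.add_emod]
  rw [Int.add_emod (a % L) j, Int.emod_emod_of_dvd _ dvd_rfl]

lemma add_period_emod (a L : ℤ) : (a + L) % L = a % L := by
  rw [show a + L = a + L * 1 by ring, Int.add_mul_emod_self_left]

lemma cnt_shift (L p j : ℤ) (hL : 0 < L) (hp : 0 ≤ p) (hpL : p < L)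
    (y : ℤ → Bool) (hy : ∀ t, y t = y (t % L)) :
    cnt L (fun t => y (t + p)) j = cnt L y j := by
  unfold cnt
  apply Finset.card_nbij' (fun i => (i + p) % L) (fun i => (i - p) % L)
  · intro a ha
    simp only [Finset.mem_coe, mem_filter, mem_Ico] at ha ⊢
    obtain ⟨⟨h0, h1⟩, h2, h3⟩ := ha
    refine ⟨⟨Int.emod_nonneg _ hL.ne', Int.emod_lt_of_pos _ hL⟩, ?_, ?_⟩
    · rw [← h2]; exact (per_congr hy (by rw [Int.emod_emod_of_dvd _ dvd_rfl]))
    · rw [← h3]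
      refine (per_congr hy ?_)
      rw [emod_add_right_emod]
      congr 1; ring
  · intro a ha
    simp only [Finset.mem_coe, mem_filter, mem_Ico] at ha ⊢
    obtain ⟨⟨h0, h1⟩, h2, h3⟩ := ha
    refine ⟨⟨Int.emod_nonneg _ hL.ne', Int.emod_lt_of_pos _ hL⟩, ?_, ?_⟩
    · rw [← h2]; exact (per_congr hy (by rw [emod_add_right_emod]; simp))
    · rw [← h3]
      refine (per_congr hy ?_)
      have : (a - p) % L + j + p = ((a - p) % L + (j + p)) := by ring
      rw [this, emod_add_right_emod]
      congr 1; ring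
  · intro a ha
    simp only [Finset.mem_coe, mem_filter, mem_Ico] at ha
    have : (a + p) % L - p = a + p - p - L * ((a + p) / L) := by
      rw [Int.emod_def]; ring
    show ((a + p) % L - p) % L = a
    rw [this]
    have : a + p - p - L * ((a + p) / L) = a + L * (-((a + p) / L)) := by ring
    rw [this, Int.add_mul_emod_self_left, Int.emod_eq_of_lt ha.1.1 ha.1.2]
  · intro a ha
    simp only [Finset.mem_coe, mem_filter, mem_Ico] at ha
    have : (a - p) % L + p = a - p - L * ((a - p) / L) + p := by
      rw [Int.emod_def]
    show ((a - p) % L + p) % L = a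
    rw [this]
    have : a - p - L * ((a - p) / L) + p = a + L * (-((a - p) / L)) := by ring
    rw [this, Int.add_mul_emod_self_left, Int.emod_eq_of_lt ha.1.1 ha.1.2]

lemma agree (c d : ℤ) (hc : 0 < c) (z : ℤ → Bool)
    (hw : ∀ s, 0 ≤ s → s < d → z s = z (s + c)) :
    ∀ t, 0 ≤ t → t < c + d → z (t % c) = z t := by
  have H : ∀ n : ℕ, ∀ t : ℤ, 0 ≤ t → t < c + d → t.toNat = n → z (t % c) = z t := by
    intro n
    induction n using Nat.strong_induction_on with
    | _ n ih =>
      intro t ht0 htc htn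
      rcases lt_or_ge t c with h | h
      · rw [Int.emod_eq_of_lt ht0 h]
      · have e1 : t % c = (t - c) % c := by
          conv_lhs => rw [show t = t - c + c by ring]
          rw [add_period_emod]
        have h2 := ih (t - c).toNat (by omega) (t - c) (by omega) (by omega) rfl
        have h3 := hw (t - c) (by omega) (by omega)
        rw [show t - c + c = t by ring] at h3
        rw [e1, h2, h3]
  intro t ht0 htc
  exact H t.toNat t ht0 htc rfl

lemma cnt_splice (L c d j : ℤ) (h1 : 0 < c) (h2 : c < L) (hj : 1 ≤ j) (hjd : j ≤ d)
    (hdL : d < L)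
    (y : ℤ → Bool) (hy : ∀ t, y t = y (t % L))
    (hw : ∀ s, 0 ≤ s → s < d → y s = y (s + c)) :
    cnt L y j = cnt c (fun t => y (t % c)) j + cnt (L - c) (fun t => y (c + t % (L - c))) j := by
  have A1 : ∀ t, 0 ≤ t → t < c + d → y (t % c) = y t := agree c d h1 y hw
  have hw2 : ∀ s, 0 ≤ s → s < d → y (c + s) = y (c + (s + (L - c))) := by
    intro s hs0 hsd
    have e : c + (s + (L - c)) = s + L := by ring
    rw [e]
    have h4 : y (s + L) = y s := per_congr hy (by rw [add_period_emod])
    rw [h4, show y (c + s) = y (s + c) from by rw [add_comm], hw s hs0 hsd]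
  have A2 : ∀ t, 0 ≤ t → t < (L - c) + d → y (c + t % (L - c)) = y (c + t) :=
    agree (L - c) d (by omega) (fun t => y (c + t)) hw2
  -- piece 1 count
  have P1 : cnt c (fun t => y (t % c)) j
      = ((Finset.Ico 0 c).filter (fun i => y i = true ∧ y (i + j) = true)).card := by
    unfold cnt
    congr 1
    apply Finset.filter_congr
    intro i hi
    simp only [mem_Ico] at hi
    beta_reduce
    rw [A1 i hi.1 (by omega), A1 (i + j) (by omega) (by omega)]
  -- piece 2 count
  have P2 : cnt (L - c) (fun t => y (c + t % (L - c))) j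
      = ((Finset.Ico c L).filter (fun i => y i = true ∧ y (i + j) = true)).card := by
    unfold cnt
    rw [show ((Finset.Ico (0:ℤ) (L - c)).filter
        (fun i => y (c + i % (L-c)) = true ∧ y (c + (i + j) % (L-c)) = true)).card
      = ((Finset.Ico (0:ℤ) (L - c)).filter
        (fun i => y (c + i) = true ∧ y (c + i + j) = true)).card from by
      congr 1
      apply Finset.filter_congr
      intro i hi
      simp only [mem_Ico] at hi
      beta_reduce
      rw [A2 i hi.1 (by omega), A2 (i + j) (by omega) (by omega),
        show c + (i + j) = c + i + j by ring]]
    apply Finset.card_nbij' (fun i => i + c) (fun i => i - c)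
    · intro a ha; simp only [Finset.mem_coe, mem_filter, mem_Ico] at ha ⊢
      refine ⟨⟨by omega, by omega⟩, ?_, ?_⟩
      · rw [show a + c = c + a by ring]; exact ha.2.1
      · rw [show a + c + j = c + a + j by ring]; exact ha.2.2
    · intro a ha; simp only [Finset.mem_coe, mem_filter, mem_Ico] at ha ⊢
      refine ⟨⟨by omega, by omega⟩, ?_, ?_⟩
      · rw [show c + (a - c) = a by ring]; exact ha.2.1
      · rw [show c + (a - c) + j = a + j by ring]; exact ha.2.2
    · intro a _; ring
    · intro a _; ring
  rw [P1, P2]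
  unfold cnt
  rw [← Finset.card_union_of_disjoint, ← Finset.filter_union, Finset.Ico_union_Ico_eq_Ico (by omega) (by omega)]
  · exact Finset.disjoint_filter_filter (Finset.Ico_disjoint_Ico_consecutive 0 c L)

lemma cnt_eq_rMod (M : ℕ) [NeZero M] (hM : 0 < M) (y : ℤ → Bool) (hy : ∀ t, y t = y (t % (M:ℤ)))
    (j : ℤ) :
    cnt M y j = rMod M (Finset.univ.filter (fun u : ZMod M => y (u.val : ℤ))) j := by
  unfold cnt rMod
  set B := Finset.univ.filter (fun u : ZMod M => y (u.val : ℤ)) with hB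
  have memB : ∀ u : ZMod M, u ∈ B ↔ y (u.val : ℤ) = true := by
    intro u; simp [hB, Finset.mem_filter, Finset.mem_univ, true_and]
  have valcast : ∀ a : ℤ, (((a : ZMod M)).val : ℤ) = a % M := fun a => ZMod.val_intCast a
  have castval : ∀ u : ZMod M, (((u.val : ℤ)) : ZMod M) = u := by
    intro u
    push_cast
    exact ZMod.natCast_rightInverse u
  have castEq : ∀ a b : ℤ, ((a : ZMod M) = (b : ZMod M)) → a % M = b % M := by
    intro a b h
    exact (ZMod.intCast_eq_intCast_iff a b M).mp h
  apply Finset.card_nbij' (fun i => (((i + j : ℤ) : ZMod M), ((i : ℤ) : ZMod M)))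
    (fun p => (p.2.val : ℤ))
  · intro a ha
    simp only [Finset.mem_coe, mem_filter, mem_Ico] at ha
    obtain ⟨⟨h0, h1⟩, h2, h3⟩ := ha
    simp only [Finset.mem_coe, Finset.mem_filter, Finset.mem_product, memB]
    refine ⟨⟨?_, ?_⟩, ?_⟩
    · rw [valcast, ← h3]; exact (per_congr hy (Int.emod_emod_of_dvd _ dvd_rfl))
    · rw [valcast, ← h2]; exact (per_congr hy (Int.emod_emod_of_dvd _ dvd_rfl))
    · push_cast; ring
  · intro p hp
    simp only [Finset.mem_coe, Finset.mem_filter, Finset.mem_product, memB] at hp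
    obtain ⟨⟨hu, hv⟩, huv⟩ := hp
    simp only [Finset.mem_coe, mem_filter, mem_Ico]
    have hvlt : (p.2.val : ℤ) < M := by exact_mod_cast ZMod.val_lt p.2
    refine ⟨⟨by positivity, hvlt⟩, hv, ?_⟩
    have e1 : (((p.2.val : ℤ) + j : ℤ) : ZMod M) = (((p.1.val : ℤ)) : ZMod M) := by
      push_cast
      rw [ZMod.natCast_rightInverse p.1, ZMod.natCast_rightInverse p.2]
      rw [← huv]; ring
    have := castEq _ _ e1
    rw [per_congr hy this]
    exact hu
  · intro a ha
    simp only [Finset.mem_coe, mem_filter, mem_Ico] at ha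
    simp only [valcast]
    exact Int.emod_eq_of_lt ha.1.1 ha.1.2
  · intro p hp
    simp only [Finset.mem_coe, Finset.mem_filter, Finset.mem_product, memB] at hp
    obtain ⟨⟨hu, hv⟩, huv⟩ := hp
    have e1 : (((p.2.val : ℤ) + j : ℤ) : ZMod M) = p.1 := by
      push_cast
      rw [ZMod.natCast_rightInverse p.2]
      rw [← huv]; ring
    exact Prod.ext e1 (castval p.2)

/-- The set of correlation vectors of cyclic sets with modulus at most `2^d`. -/
def Sset (d : ℕ) : Set (Fin d → ℝ) :=
  {v | ∃ M : ℕ, 1 ≤ M ∧ M ≤ 2 ^ d ∧ ∃ B : Finset (ZMod M),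
    v = fun j : Fin d => (rMod M B (((j : ℕ) : ℤ) + 1) : ℝ) / M}

lemma main_hull (d : ℕ) (hd : 1 ≤ d) :
    ∀ L : ℕ, 1 ≤ L → ∀ y : ℤ → Bool, (∀ t, y t = y (t % (L:ℤ))) →
      (fun j : Fin d => (cnt L y (((j : ℕ) : ℤ) + 1) : ℝ) / L) ∈ convexHull ℝ (Sset d) := by
  intro L
  induction L using Nat.strong_induction_on with
  | _ L ih =>
    intro hL y hy
    by_cases hsmall : L ≤ 2 ^ d
    · apply subset_convexHull
      haveI : NeZero L := ⟨by omega⟩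
      refine ⟨L, hL, hsmall, Finset.univ.filter (fun u : ZMod L => y (u.val : ℤ)), ?_⟩
      funext j
      rw [← cnt_eq_rMod L (by omega) y hy]
    · push_neg at hsmall
      have hdL : (d : ℤ) < (L : ℤ) := by
        have := Nat.lt_two_pow_self (n := d); exact_mod_cast by omega
      -- pigeonhole: two equal d-windows
      obtain ⟨p0, hp0, q0, hq0, hpq0, hfeq0⟩ :=
        Finset.exists_ne_map_eq_of_card_lt_of_maps_to
          (s := Finset.Ico (0:ℤ) (L:ℤ)) (t := (Finset.univ : Finset (Fin d → Bool)))
          (f := fun a => fun t : Fin d => y (a + ((t : ℕ) : ℤ)))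
          (by
            rw [Int.card_Ico]
            simp only [Finset.card_univ, Fintype.card_fun, Fintype.card_bool,
              Fintype.card_fin]
            omega)
          (fun a _ => Finset.mem_univ _)
      -- order them
      obtain ⟨p, q, hp, hq, hlt, hfeq⟩ :
          ∃ p q : ℤ, p ∈ Finset.Ico (0:ℤ) (L:ℤ) ∧ q ∈ Finset.Ico (0:ℤ) (L:ℤ) ∧ p < q ∧
            (fun t : Fin d => y (p + ((t : ℕ) : ℤ))) = (fun t : Fin d => y (q + ((t : ℕ) : ℤ))) := by
        rcases lt_or_gt_of_ne hpq0 with h | h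
        · exact ⟨p0, q0, hp0, hq0, h, hfeq0⟩
        · exact ⟨q0, p0, hq0, hp0, h, hfeq0.symm⟩
      simp only [Finset.mem_Ico] at hp hq
      set c : ℤ := q - p with hc
      have hc0 : 0 < c := by omega
      have hcL : c < L := by omega
      set y' : ℤ → Bool := fun t => y (t + p) with hy'def
      have hy' : ∀ t, y' t = y' (t % (L:ℤ)) := by
        intro t
        apply per_congr hy
        rw [emod_add_right_emod]
      have hw : ∀ s, 0 ≤ s → s < (d:ℤ) → y' s = y' (s + c) := by
        intro s hs0 hsd
        have hsn : s.toNat < d := by omega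
        have hth := congrFun hfeq ⟨s.toNat, hsn⟩
        have e1 : y' s = y (p + ((s.toNat : ℕ) : ℤ)) := by
          apply congrArg y; omega
        have e2 : y' (s + c) = y (q + ((s.toNat : ℕ) : ℤ)) := by
          apply congrArg y; omega
        rw [e1, e2, hth]
      set c' : ℕ := c.toNat with hc'
      set L2 : ℕ := ((L:ℤ) - c).toNat with hL2
      have hc'c : (c' : ℤ) = c := Int.toNat_of_nonneg hc0.le
      have hL2c : (L2 : ℤ) = (L:ℤ) - c := Int.toNat_of_nonneg (by omega)
      set y1 : ℤ → Bool := fun t => y' (t % c) with hy1def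
      set y2 : ℤ → Bool := fun t => y' (c + t % ((L:ℤ) - c)) with hy2def
      have hy1 : ∀ t, y1 t = y1 (t % (c' : ℤ)) := by
        intro t
        simp only [hy1def, hc'c]
        rw [Int.emod_emod_of_dvd _ dvd_rfl]
      have hy2 : ∀ t, y2 t = y2 (t % (L2 : ℤ)) := by
        intro t
        simp only [hy2def, hL2c]
        rw [Int.emod_emod_of_dvd _ dvd_rfl]
      have m1 := ih c' (by omega) (by omega) y1 hy1
      have m2 := ih L2 (by omega) (by omega) y2 hy2
      have key : ∀ j : ℤ, 1 ≤ j → j ≤ (d:ℤ) →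
          cnt L y j = cnt c' y1 j + cnt L2 y2 j := by
        intro j hj1 hjd
        rw [hc'c, hL2c]
        rw [← cnt_shift (L:ℤ) p j (by omega) (by omega) (by omega) y hy]
        exact cnt_splice (L:ℤ) c (d:ℤ) j hc0 hcL hj1 hjd hdL y' hy' hw
      have hcomb := (convex_convexHull ℝ (Sset d)) (a := (c':ℝ)/(L:ℝ)) (b := (L2:ℝ)/(L:ℝ)) m1 m2
        (by
          have h1 : (0:ℝ) < (c':ℝ) := by exact_mod_cast (show 0 < c' by omega)
          have h2 : (0:ℝ) < (L:ℝ) := by exact_mod_cast (show 0 < L by omega)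
          positivity)
        (by
          have h1 : (0:ℝ) < (L2:ℝ) := by exact_mod_cast (show 0 < L2 by omega)
          have h2 : (0:ℝ) < (L:ℝ) := by exact_mod_cast (show 0 < L by omega)
          positivity)
        (by
          have hsum : (c':ℝ) + (L2:ℝ) = (L:ℝ) := by
            have : (c':ℤ) + (L2:ℤ) = (L:ℤ) := by omega
            exact_mod_cast this
          have h2 : (0:ℝ) < (L:ℝ) := by exact_mod_cast (show 0 < L by omega)
          rw [← add_div, hsum, div_self h2.ne'])
      convert hcomb using 1
      funext j
      simp only [Pi.add_apply, Pi.smul_apply, smul_eq_mul]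
      have hk := key (((j : ℕ) : ℤ) + 1) (by omega) (by
        have := j.2; omega)
      rw [hk]
      have hc'0 : (0:ℝ) < (c':ℝ) := by exact_mod_cast (show 0 < c' by omega)
      have hL20 : (0:ℝ) < (L2:ℝ) := by exact_mod_cast (show 0 < L2 by omega)
      have hL0 : (0:ℝ) < (L:ℝ) := by exact_mod_cast (show 0 < L by omega)
      push_cast
      field_simp


lemma rZ_le (A : Finset ℤ) (N : ℕ) (hA : A ⊆ Finset.Icc 1 (N : ℤ)) (j : ℤ) :
    rZ A j ≤ N := by
  unfold rZ
  calc ((A ×ˢ A).filter (fun p => p.1 - p.2 = j)).card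
      ≤ A.card := by
        apply Finset.card_le_card_of_injOn (fun p => p.2)
        · intro p hp
          simp only [Finset.mem_coe, Finset.mem_filter, Finset.mem_product] at hp
          exact hp.1.2
        · intro p hp q hq hpq
          simp only [Finset.coe_filter, Set.mem_setOf_eq, Finset.mem_product] at hp hq
          have : p.1 = q.1 := by
            have h1 := hp.2; have h2 := hq.2
            simp only at hpq
            omega
          exact Prod.ext this hpq
    _ ≤ (Finset.Icc (1:ℤ) (N:ℤ)).card := Finset.card_le_card hA
    _ = N := by rw [Int.card_Icc]; omega

lemma cnt_eq_rZ (d N : ℕ) (hd : 1 ≤ d) (hN : 1 ≤ N) (A : Finset ℤ)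
    (hA : A ⊆ Finset.Icc 1 (N : ℤ)) (j : ℤ) (hj1 : 1 ≤ j) (hjd : j ≤ d) :
    cnt ((N + d : ℕ) : ℤ) (fun t => decide ((t % ((N + d : ℕ) : ℤ)) ∈ A)) j = rZ A j := by
  set L0 : ℤ := ((N + d : ℕ) : ℤ) with hL0
  have hL0N : L0 = (N : ℤ) + d := by push_cast [hL0]; ring
  have hmemA : ∀ x : ℤ, x ∈ A → 1 ≤ x ∧ x ≤ N := by
    intro x hx
    have := hA hx
    simp only [Finset.mem_Icc] at this
    exact this
  unfold cnt rZ
  apply Finset.card_nbij' (fun i => (i + j, i)) (fun p => p.2)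
  · intro a ha
    simp only [Finset.mem_coe, Finset.mem_filter, Finset.mem_Ico, decide_eq_true_eq] at ha
    obtain ⟨⟨h0, h1⟩, h2, h3⟩ := ha
    rw [Int.emod_eq_of_lt h0 h1] at h2
    have ha1 := hmemA a h2
    have hjlt : a + j < L0 ∨ a + j = L0 := by omega
    have h4 : a + j ∈ A := by
      rcases hjlt with h | h
      · rwa [Int.emod_eq_of_lt (by omega) h] at h3
      · exfalso
        rw [h] at h3
        rw [Int.emod_self] at h3
        have := hmemA 0 h3
        omega
    simp only [Finset.mem_coe, Finset.mem_filter, Finset.mem_product]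
    exact ⟨⟨h4, h2⟩, by ring⟩
  · intro p hp
    simp only [Finset.mem_coe, Finset.mem_filter, Finset.mem_product] at hp
    obtain ⟨⟨h1, h2⟩, h3⟩ := hp
    have hp1 := hmemA _ h1
    have hp2 := hmemA _ h2
    simp only [Finset.mem_coe, Finset.mem_filter, Finset.mem_Ico, decide_eq_true_eq]
    refine ⟨⟨by omega, by omega⟩, ?_, ?_⟩
    · rwa [Int.emod_eq_of_lt (by omega) (by omega)]
    · have : p.2 + j = p.1 := by omega
      rw [this, Int.emod_eq_of_lt (by omega) (by omega)]
      exact h1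
  · intro a _; rfl
  · intro p hp
    simp only [Finset.mem_coe, Finset.mem_filter, Finset.mem_product] at hp
    have : p.2 + j = p.1 := by have := hp.2; omega
    exact Prod.ext this rfl

theorem stmt14 :
    ∃ C : ℝ, 0 < C ∧ ∀ d : ℕ, 1 ≤ d → ∀ N : ℕ, 1 ≤ N →
      ∀ A : Finset ℤ, A ⊆ Finset.Icc 1 (N : ℤ) →
        ∃ m : ℕ, 1 ≤ m ∧ m ≤ 2 ^ (d * (d + 1)) ∧
          ∃ lam : Fin m → ℝ, (∀ i, 0 ≤ lam i) ∧ (∑ i, lam i = 1) ∧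
            ∃ M : Fin m → ℕ, (∀ i, 1 ≤ M i ∧ M i ≤ 2 ^ d) ∧
              ∃ B : (i : Fin m) → Finset (ZMod (M i)),
                ∀ j : ℕ, 1 ≤ j → j ≤ d →
                  |(rZ A (j : ℤ) : ℝ) / N
                      - ∑ i, lam i * ((rMod (M i) (B i) (j : ℤ) : ℝ) / (M i))|
                    ≤ C * 2 ^ d * 2 ^ (d * (d + 1)) / N := by
  refine ⟨1, one_pos, ?_⟩
  intro d hd N hN A hA
  set L0 : ℕ := N + d with hL0
  set y : ℤ → Bool := fun t => decide ((t % ((L0 : ℕ) : ℤ)) ∈ A) with hy_def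
  have hy : ∀ t, y t = y (t % ((L0:ℕ) : ℤ)) := by
    intro t
    simp only [hy_def]
    rw [Int.emod_emod_of_dvd _ dvd_rfl]
  have hP : (fun j : Fin d => (rZ A (((j : ℕ) : ℤ) + 1) : ℝ) / L0)
      ∈ convexHull ℝ (Sset d) := by
    have := main_hull d hd L0 (by omega) y hy
    convert this using 2 with j
    rw [cnt_eq_rZ d N hd hN A hA (((j : ℕ) : ℤ) + 1) (by omega)
      (by have := j.2; omega)]
  obtain ⟨ι, hι, z, w, hrange, haff, hwpos, hwsum, hwz⟩ :=
    eq_pos_convex_span_of_mem_convexHull hP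
  have hcard : Fintype.card ι ≤ d + 1 := by
    have h1 := haff.card_le_finrank_succ
    have h2 : Module.finrank ℝ (vectorSpan ℝ (Set.range z)) ≤ Module.finrank ℝ (Fin d → ℝ) :=
      Submodule.finrank_le _
    rw [Module.finrank_fin_fun] at h2
    omega
  set m : ℕ := Fintype.card ι with hm
  have hne : Nonempty ι := by
    by_contra h
    simp only [not_nonempty_iff] at h
    have : (∑ i : ι, w i) = 0 := by simp
    rw [this] at hwsum
    exact one_ne_zero hwsum.symm
  have hm1 : 1 ≤ m := Fintype.card_pos
  have hz : ∀ i : ι, ∃ M : ℕ, (1 ≤ M ∧ M ≤ 2 ^ d) ∧ ∃ B : Finset (ZMod M),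
      z i = fun jf : Fin d => (rMod M B (((jf : ℕ) : ℤ) + 1) : ℝ) / M := by
    intro i
    obtain ⟨M, h1, h2, B, hB⟩ := hrange ⟨i, rfl⟩
    exact ⟨M, ⟨h1, h2⟩, B, hB⟩
  choose Mf hMf Bf hBf using hz
  set e : ι ≃ Fin m := Fintype.equivFin ι with he
  refine ⟨m, hm1, ?_, fun i => w (e.symm i), fun i => (hwpos _).le, ?_,
    fun i => Mf (e.symm i), fun i => hMf (e.symm i),
    fun i => Bf (e.symm i), ?_⟩
  · -- m ≤ 2 ^ (d * (d + 1))
    have h1 : d + 1 ≤ 2 ^ d := Nat.lt_two_pow_self (n := d)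
    have h2 : (2:ℕ) ^ d ≤ 2 ^ (d * (d + 1)) := Nat.pow_le_pow_right (by norm_num) (by nlinarith)
    omega
  · rw [Equiv.sum_comp e.symm w]
    exact hwsum
  · intro j hj1 hjd
    set jf : Fin d := ⟨j - 1, by omega⟩ with hjf
    have hcoord : ∑ i : Fin m, w (e.symm i) *
        ((rMod (Mf (e.symm i)) (Bf (e.symm i)) ((j : ℕ) : ℤ) : ℝ) / (Mf (e.symm i)))
        = (rZ A ((j : ℕ) : ℤ) : ℝ) / L0 := by
      have hterm : ∀ i : ι, w i *
          ((rMod (Mf i) (Bf i) ((j : ℕ) : ℤ) : ℝ) / (Mf i)) = w i * z i jf := by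
        intro i
        rw [hBf i]
        congr 2
        have : (((jf : ℕ) : ℤ) + 1) = ((j : ℕ) : ℤ) := by
          simp only [hjf]
          omega
        rw [this]
      calc ∑ i : Fin m, w (e.symm i) *
            ((rMod (Mf (e.symm i)) (Bf (e.symm i)) ((j : ℕ) : ℤ) : ℝ) / (Mf (e.symm i)))
          = ∑ i : ι, w i * ((rMod (Mf i) (Bf i) ((j : ℕ) : ℤ) : ℝ) / (Mf i)) :=
            Equiv.sum_comp e.symm
              (fun i : ι => w i * ((rMod (Mf i) (Bf i) ((j : ℕ) : ℤ) : ℝ) / (Mf i)))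
        _ = ∑ i : ι, w i * z i jf := by
            apply Finset.sum_congr rfl; intro i _; exact hterm i
        _ = (∑ i : ι, w i • z i) jf := by
            rw [Finset.sum_apply]
            apply Finset.sum_congr rfl; intro i _
            simp
        _ = (rZ A (((jf : ℕ) : ℤ) + 1) : ℝ) / L0 := by rw [hwz]
        _ = (rZ A ((j : ℕ) : ℤ) : ℝ) / L0 := by
            have hjj : (((jf : ℕ) : ℤ) + 1) = ((j : ℕ) : ℤ) := by
              simp only [hjf]; omega
            rw [hjj]
    rw [hcoord]
    -- the arithmetic bound
    have hrle : (rZ A ((j:ℕ):ℤ) : ℝ) ≤ N := by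
      exact_mod_cast rZ_le A N hA _
    have hr0 : (0:ℝ) ≤ (rZ A ((j:ℕ):ℤ) : ℝ) := by positivity
    have hN0 : (0:ℝ) < (N:ℝ) := by exact_mod_cast hN
    have hL00 : (0:ℝ) < (L0:ℝ) := by exact_mod_cast (show 0 < L0 by omega)
    have hLN : (L0:ℝ) = (N:ℝ) + d := by push_cast [hL0]; ring
    have hd0 : (0:ℝ) ≤ (d:ℝ) := by positivity
    have habs : |(rZ A ((j:ℕ):ℤ) : ℝ) / N - (rZ A ((j:ℕ):ℤ) : ℝ) / L0|
        = (rZ A ((j:ℕ):ℤ) : ℝ) * d / (N * L0) := by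
      rw [abs_of_nonneg]
      · rw [hLN]; field_simp; ring
      · rw [hLN]
        rw [div_sub_div _ _ hN0.ne' (by linarith)]
        apply div_nonneg
        · nlinarith
        · nlinarith
    rw [habs]
    have h2d : (d:ℝ) ≤ 2^d * 2^(d*(d+1)) := by
      have h1 : (d:ℕ) ≤ 2^d := (Nat.lt_two_pow_self (n := d)).le
      have h3 : (1:ℝ) ≤ (2:ℝ)^(d*(d+1)) := one_le_pow₀ (by norm_num)
      have h4 : (d:ℝ) ≤ 2^d := by exact_mod_cast h1
      nlinarith [pow_pos (by norm_num : (0:ℝ) < 2) d]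
    have hNL : (N:ℝ) ≤ (L0:ℝ) := by exact_mod_cast (show N ≤ L0 by omega)
    calc (rZ A ((j:ℕ):ℤ) : ℝ) * d / (N * L0) ≤ (N:ℝ) * d / (N * L0) := by gcongr
      _ = (d:ℝ) / L0 := by field_simp
      _ ≤ (d:ℝ) / N := by gcongr
      _ ≤ (2^d * 2^(d*(d+1))) / N := by gcongr
      _ = 1 * 2^d * 2^(d*(d+1)) / N := by ring
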